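/- Let f̃₁, f̃₂ : ℝ × ℝ → ℂ be real analytic on the square [0,1]². Then the function g̃(t,s) := ∫ₛᵗ f̃₂(t,τ) f̃₁(τ,s) dτ is real analytic in (t,s) on [0,1]². (That is, the class of kernels of the form f̃(t,s)Θ(t−s) with f̃ analytic is closed under the ★-product.) -/

import Mathlib

open MeasureTheory Set
open scoped NNReal ENNReal

variable {E : Type*} [NormedAddCommGroup E] [NormedSpace ℝ E]

/-- Core lemma: if `F` has a power series on a ball of radius `r` centered at `(x₀, u₀)`,
then the parametric integral over a subinterval of `ball u₀ (r/4)` is analytic at `x₀`. -/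
lemma analyticAt_setIntegral_of_hasFPowerSeriesOnBall
    (F : E × ℝ → ℂ) (x₀ : E) (u₀ : ℝ)
    (p : FormalMultilinearSeries ℝ (E × ℝ) ℂ) (r : ℝ≥0) (hr : 0 < r)
    (hp : HasFPowerSeriesOnBall F p (x₀, u₀) r) (a b : ℝ) (hab : a ≤ b)
    (hI : ∀ u ∈ Icc a b, ‖u - u₀‖₊ < r / 4) :
    AnalyticAt ℝ (fun x => ∫ u in Ioc a b, F (x, u)) x₀ := by
  have hrad : (r : ℝ≥0∞) ≤ p.radius := hp.r_le
  have hr2rad : ((r / 2 : ℝ≥0) : ℝ≥0∞) < p.radius := by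
    refine lt_of_lt_of_le ?_ hrad
    exact_mod_cast NNReal.half_lt_self hr.ne'
  -- the coefficients, as functions of `u`
  set inlE : E →L[ℝ] E × ℝ := ContinuousLinearMap.inl ℝ E ℝ with hinlE
  set c : (n : ℕ) → ℝ → ContinuousMultilinearMap ℝ (fun _ : Fin n => E) ℂ :=
    fun n u => (p.changeOrigin ((0 : E), u - u₀) n).compContinuousLinearMap
      (fun _ => inlE) with hc
  -- norm facts
  have hnn : ∀ u : ℝ, ‖((0 : E), u - u₀)‖₊ = ‖u - u₀‖₊ := by
    intro u
    simp [Prod.nnnorm_def']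
  have hinl_norm : ‖inlE‖ ≤ 1 := by
    refine ContinuousLinearMap.opNorm_le_bound _ zero_le_one (fun x => ?_)
    rw [one_mul, hinlE, ContinuousLinearMap.inl_apply, Prod.norm_def]
    simp
  -- uniform coefficient bound
  set B : ℕ → ℝ≥0 := fun k =>
    ∑' s : Σ l : ℕ, { s : Finset (Fin (k + l)) // s.card = l },
      ‖p (k + s.1)‖₊ * (r / 2) ^ s.1 with hB
  have hBsum : Summable fun k => B k * (r / 4) ^ k := by
    have h34 : ((r / 2 + r / 4 : ℝ≥0) : ℝ≥0∞) < p.radius := by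
      refine lt_of_lt_of_le ?_ hrad
      rw [ENNReal.coe_lt_coe]
      rw [← NNReal.coe_lt_coe]
      push_cast
      have : (0:ℝ) < r := hr
      linarith
    have := (NNReal.summable_sigma.1 (p.changeOriginSeries_summable_aux₁ h34)).2
    refine this.congr fun k => ?_
    simp only [hB, NNReal.tsum_mul_right]
  have hBc : ∀ u : ℝ, ‖u - u₀‖₊ ≤ r / 2 → ∀ n, ‖c n u‖₊ ≤ B n := by
    intro u hu n
    have h1 : (‖((0 : E), u - u₀)‖₊ : ℝ≥0∞) < p.radius := by
      rw [hnn]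
      exact lt_of_le_of_lt (by exact_mod_cast hu) hr2rad
    have h2 := p.nnnorm_changeOrigin_le n h1
    have h3 : ‖c n u‖₊ ≤ ‖p.changeOrigin ((0 : E), u - u₀) n‖₊ := by
      have := (p.changeOrigin ((0 : E), u - u₀) n).norm_compContinuousLinearMap_le
        (fun _ : Fin n => inlE)
      rw [← NNReal.coe_le_coe]
      refine le_trans this ?_
      calc ‖p.changeOrigin ((0:E), u - u₀) n‖ * (∏ _i : Fin n, ‖inlE‖)
          ≤ ‖p.changeOrigin ((0:E), u - u₀) n‖ * 1 := by
            gcongr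
            · exact Finset.prod_le_one (fun _ _ => norm_nonneg _) (fun _ _ => hinl_norm)
        _ = _ := mul_one _
    refine h3.trans (h2.trans ?_)
    refine Summable.tsum_le_tsum (fun s => ?_) ?_ ?_
    · gcongr
      rw [hnn]
      exact hu
    · refine NNReal.summable_of_le (fun s => ?_) (p.changeOriginSeries_summable_aux₂ hr2rad n)
      gcongr
      rw [hnn]
      exact hu
    · exact p.changeOriginSeries_summable_aux₂ hr2rad n
  -- continuity of coefficients
  have hr4rad : ∀ u ∈ Icc a b, (‖((0 : E), u - u₀)‖₊ : ℝ≥0∞) < p.radius := by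
    intro u hu
    rw [hnn]
    refine lt_of_lt_of_le ?_ hrad
    exact_mod_cast (hI u hu).trans_le (by
      rw [← NNReal.coe_le_coe]
      push_cast
      have : (0:ℝ) ≤ r := r.2
      linarith)
  have hccont : ∀ n, ContinuousOn (fun u => c n u) (Icc a b) := by
    intro n
    have h0 : 0 < p.radius := lt_of_lt_of_le (by exact_mod_cast hr) hrad
    have h1 := (p.hasFPowerSeriesOnBall_changeOrigin n h0).continuousOn
    have h2 : ContinuousOn (fun u : ℝ => ((0 : E), u - u₀)) (Icc a b) :=
      (continuous_const.prodMk (continuous_id.sub continuous_const)).continuousOn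
    have h3 : ContinuousOn (fun u : ℝ => p.changeOrigin ((0 : E), u - u₀) n) (Icc a b) := by
      refine h1.comp h2 (fun u hu => ?_)
      simpa [enorm_eq_nnnorm] using hr4rad u hu
    exact (ContinuousMultilinearMap.compContinuousLinearMapL
      (fun _ : Fin n => inlE)).continuous.comp_continuousOn h3 |>.congr
      (fun u _ => by simp [c])
  have hcint : ∀ n, IntegrableOn (fun u => c n u) (Ioc a b) := fun n =>
    ((hccont n).integrableOn_Icc).mono_set Ioc_subset_Icc_self
  -- the candidate power series
  set Q : FormalMultilinearSeries ℝ E ℂ := fun n => ∫ u in Ioc a b, c n u with hQ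
  have hIcc : ∀ u ∈ Ioc a b, ‖u - u₀‖₊ ≤ r / 2 := by
    intro u hu
    refine le_trans (hI u (Ioc_subset_Icc_self hu)).le ?_
    rw [← NNReal.coe_le_coe]
    push_cast
    have : (0:ℝ) ≤ r := r.2
    linarith
  have hQle : ∀ n, ‖Q n‖₊ ≤ (b - a).toNNReal * B n := by
    intro n
    rw [← NNReal.coe_le_coe, NNReal.coe_mul,
      Real.coe_toNNReal _ (by linarith : (0:ℝ) ≤ b - a)]
    have h1 : ‖Q n‖ ≤ (B n : ℝ) * (volume (Ioc a b)).toReal := by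
      refine norm_setIntegral_le_of_norm_le_const measure_Ioc_lt_top ?_
      · intro u hu
        simpa using NNReal.coe_le_coe.2 (hBc u (hIcc u hu) n)
    rw [Real.volume_Ioc, ENNReal.toReal_ofReal (by linarith)] at h1
    calc ‖Q n‖ ≤ (B n : ℝ) * (b - a) := h1
      _ = (b - a) * (B n : ℝ) := by ring
  have main : HasFPowerSeriesOnBall (fun x => ∫ u in Ioc a b, F (x, u)) Q x₀ ((r / 4 : ℝ≥0) : ℝ≥0∞) := by
    constructor
    · -- radius bound
      refine FormalMultilinearSeries.le_radius_of_summable_nnnorm _ ?_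
      refine NNReal.summable_of_le (fun n => ?_) (hBsum.mul_left ((b - a).toNNReal))
      calc ‖Q n‖₊ * (r / 4) ^ n ≤ ((b - a).toNNReal * B n) * (r / 4) ^ n := by
            gcongr; exact hQle n
        _ = (b - a).toNNReal * (B n * (r / 4) ^ n) := by ring
    · exact ENNReal.coe_pos.2 (by positivity)
    · intro y hy
      rw [mem_emetric_ball_zero_iff] at hy
      have hy' : ‖y‖₊ < r / 4 := by exact_mod_cast hy
      -- pointwise sums
      have hpt : ∀ u ∈ Ioc a b, HasSum (fun n => c n u (fun _ => y)) (F (x₀ + y, u)) := by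
        intro u hu
        have h1 : (‖((0 : E), u - u₀)‖₊ : ℝ≥0∞) < r := by
          rw [hnn]
          exact_mod_cast lt_of_le_of_lt (hIcc u hu) (NNReal.half_lt_self hr.ne')
        have h2 := hp.changeOrigin h1
        have h3 : ((y, (0 : ℝ)) : E × ℝ) ∈
            Metric.eball (0 : E × ℝ) ((r : ℝ≥0∞) - ‖((0 : E), u - u₀)‖₊) := by
          have hn : ‖((y, (0:ℝ)) : E × ℝ)‖₊ = ‖y‖₊ := by simp [Prod.nnnorm_def']
          rw [mem_emetric_ball_zero_iff, enorm_eq_nnnorm, hn, hnn]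
          have hq : (‖u - u₀‖₊ : ℝ≥0∞) ≤ ((r / 2 : ℝ≥0) : ℝ≥0∞) := by
            exact_mod_cast hIcc u hu
          calc (‖y‖₊ : ℝ≥0∞) < ((r / 4 : ℝ≥0) : ℝ≥0∞) := by exact_mod_cast hy'
            _ ≤ (r : ℝ≥0∞) - ((r / 2 : ℝ≥0) : ℝ≥0∞) := by
                rw [← ENNReal.coe_sub, ENNReal.coe_le_coe, ← NNReal.coe_le_coe]
                push_cast
                rw [NNReal.coe_sub (by
                  rw [← NNReal.coe_le_coe]; push_cast
                  have : (0:ℝ) ≤ r := r.2; linarith)]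
                push_cast
                have : (0:ℝ) ≤ r := r.2
                linarith
            _ ≤ (r : ℝ≥0∞) - (‖u - u₀‖₊ : ℝ≥0) := tsub_le_tsub le_rfl hq
        have h4 := h2.hasSum h3
        have h5 : ((x₀, u₀) + ((0 : E), u - u₀) + (y, (0:ℝ))) = ((x₀ + y : E), u) := by
          ext <;> simp <;> ring
        rw [h5] at h4
        refine h4.congr_fun fun n => ?_
        simp [c, hinlE]
      -- integrability and norm summability of the terms
      have hterm_int : ∀ n,
          IntegrableOn (fun u => c n u (fun _ => y)) (Ioc a b) := by
        intro n
        exact (ContinuousMultilinearMap.apply ℝ (fun _ : Fin n => E) ℂ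
          (fun _ => y)).integrable_comp (hcint n)
      have hterm_bound : ∀ n, ∀ u ∈ Ioc a b,
          ‖c n u (fun _ => y)‖ ≤ (B n : ℝ) * ((r : ℝ) / 4) ^ n := by
        intro n u hu
        refine le_trans ((c n u).le_opNorm _) ?_
        have h1 : ‖c n u‖ ≤ (B n : ℝ) := by exact_mod_cast hBc u (hIcc u hu) n
        have h2 : (∏ _i : Fin n, ‖y‖) ≤ ((r : ℝ) / 4) ^ n := by
          rw [Finset.prod_const]
          simp only [Finset.card_univ, Fintype.card_fin]
          refine pow_le_pow_left₀ (norm_nonneg _) ?_ n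
          have := hy'.le
          rw [← NNReal.coe_le_coe] at this
          push_cast at this
          simpa [nnnorm] using this
        exact mul_le_mul h1 h2 (Finset.prod_nonneg fun _ _ => norm_nonneg _)
          (by positivity)

      have hsum_int_norm : Summable fun n => ∫ u in Ioc a b, ‖c n u (fun _ => y)‖ := by
        have hple : ∀ n, ∫ u in Ioc a b, ‖c n u (fun _ => y)‖
            ≤ (b - a) * ((B n : ℝ) * ((r : ℝ) / 4) ^ n) := by
          intro n
          have h1 : ∫ u in Ioc a b, ‖c n u (fun _ => y)‖
              ≤ ∫ _u in Ioc a b, (B n : ℝ) * ((r : ℝ) / 4) ^ n := by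
            refine setIntegral_mono_on ((hterm_int n).norm) (integrableOn_const measure_Ioc_lt_top.ne)
              measurableSet_Ioc (fun u hu => hterm_bound n u hu)
          rwa [setIntegral_const, Measure.real, Real.volume_Ioc,
            ENNReal.toReal_ofReal (by linarith), smul_eq_mul] at h1
        refine Summable.of_nonneg_of_le
          (fun n => integral_nonneg fun u => norm_nonneg _) hple ?_
        have : Summable fun n => (B n : ℝ) * ((r : ℝ) / 4) ^ n := by
          have := NNReal.summable_coe.2 hBsum
          push_cast at this
          exact this
        exact this.mul_left _
      have hswap := MeasureTheory.hasSum_integral_of_summable_integral_norm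
        (μ := volume.restrict (Ioc a b)) (F := fun n u => c n u (fun _ => y))
        hterm_int hsum_int_norm
      have heq : ∫ u in Ioc a b, (∑' n, c n u (fun _ => y)) = ∫ u in Ioc a b, F (x₀ + y, u) := by
        refine setIntegral_congr_fun measurableSet_Ioc (fun u hu => ?_)
        exact (hpt u hu).tsum_eq
      rw [heq] at hswap
      refine hswap.congr_fun fun n => ?_
      exact ((ContinuousMultilinearMap.apply ℝ (fun _ : Fin n => E) ℂ
        (fun _ => y)).integral_comp_comm (hcint n)).symm
  exact main.analyticAt

/-- The class of kernels of the form `f̃(t,s)Θ(t−s)` with `f̃` analytic is closed under the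
★-product: the Volterra composition of two functions analytic on `[0,1]²` is again analytic
on `[0,1]²`. -/
theorem volterra_composition_analytic
    (f1 f2 : ℝ × ℝ → ℂ)
    (h1 : AnalyticOnNhd ℝ f1 (Icc (0:ℝ) 1 ×ˢ Icc (0:ℝ) 1))
    (h2 : AnalyticOnNhd ℝ f2 (Icc (0:ℝ) 1 ×ˢ Icc (0:ℝ) 1)) :
    AnalyticOnNhd ℝ (fun p : ℝ × ℝ => ∫ τ in p.2..p.1, f2 (p.1, τ) * f1 (τ, p.2))
      (Icc (0:ℝ) 1 ×ˢ Icc (0:ℝ) 1) := by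
  rintro ⟨t₀, s₀⟩ hts
  obtain ⟨ht₀, hs₀⟩ : t₀ ∈ Icc (0:ℝ) 1 ∧ s₀ ∈ Icc (0:ℝ) 1 := hts
  -- the reparametrized integrand
  set F : (ℝ × ℝ) × ℝ → ℂ := fun q =>
    ((q.1.1 - q.1.2 : ℝ) : ℂ) *
      (f2 (q.1.1, (q.1.1 - q.1.2) * q.2 + q.1.2) *
       f1 ((q.1.1 - q.1.2) * q.2 + q.1.2, q.1.2)) with hF
  -- change of variables: the target equals a fixed-domain parametric integral
  have key : ∀ x : ℝ × ℝ,
      (∫ τ in x.2..x.1, f2 (x.1, τ) * f1 (τ, x.2)) = ∫ u in (0:ℝ)..1, F (x, u) := by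
    rintro ⟨t, s⟩
    have h := intervalIntegral.smul_integral_comp_mul_add
      (a := (0:ℝ)) (b := (1:ℝ)) (f := fun τ => f2 (t, τ) * f1 (τ, s)) (t - s) s
    simp only [mul_zero, zero_add, mul_one] at h
    have : (t - s) + s = t := by ring
    rw [this] at h
    rw [← h, ← intervalIntegral.integral_smul]
    refine intervalIntegral.integral_congr fun u _ => ?_
    simp [hF, Complex.real_smul]
  -- analyticity of F on `{(t₀,s₀)} × [0,1]`
  have hFan : ∀ u ∈ Icc (0:ℝ) 1, AnalyticAt ℝ F ((t₀, s₀), u) := by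
    intro u hu
    have ht : AnalyticAt ℝ (fun q : (ℝ × ℝ) × ℝ => q.1.1) ((t₀, s₀), u) :=
      (analyticAt_fst.comp analyticAt_fst)
    have hs : AnalyticAt ℝ (fun q : (ℝ × ℝ) × ℝ => q.1.2) ((t₀, s₀), u) :=
      (analyticAt_snd.comp analyticAt_fst)
    have hu' : AnalyticAt ℝ (fun q : (ℝ × ℝ) × ℝ => q.2) ((t₀, s₀), u) := analyticAt_snd
    have hτ : AnalyticAt ℝ
        (fun q : (ℝ × ℝ) × ℝ => (q.1.1 - q.1.2) * q.2 + q.1.2) ((t₀, s₀), u) :=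
      ((ht.sub hs).mul hu').add hs
    have hτmem : (t₀ - s₀) * u + s₀ ∈ Icc (0:ℝ) 1 := by
      constructor
      · nlinarith [hu.1, hu.2, ht₀.1, ht₀.2, hs₀.1, hs₀.2,
          mul_nonneg hu.1 ht₀.1, mul_nonneg (sub_nonneg.2 hu.2) hs₀.1]
      · nlinarith [hu.1, hu.2, ht₀.1, ht₀.2, hs₀.1, hs₀.2,
          mul_nonneg hu.1 (sub_nonneg.2 ht₀.2), mul_nonneg (sub_nonneg.2 hu.2) (sub_nonneg.2 hs₀.2)]
    have hofr : AnalyticAt ℝ (fun q : (ℝ × ℝ) × ℝ => ((q.1.1 - q.1.2 : ℝ) : ℂ)) ((t₀, s₀), u) :=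
      (Complex.ofRealCLM.analyticAt _).comp (ht.sub hs)
    have hf2 : AnalyticAt ℝ
        (fun q : (ℝ × ℝ) × ℝ => f2 (q.1.1, (q.1.1 - q.1.2) * q.2 + q.1.2)) ((t₀, s₀), u) := by
      refine AnalyticAt.comp ?_ (ht.prod hτ)
      exact h2 _ (by exact ⟨ht₀, hτmem⟩)
    have hf1 : AnalyticAt ℝ
        (fun q : (ℝ × ℝ) × ℝ => f1 ((q.1.1 - q.1.2) * q.2 + q.1.2, q.1.2)) ((t₀, s₀), u) := by
      refine AnalyticAt.comp ?_ (hτ.prod hs)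
      exact h1 _ (by exact ⟨hτmem, hs₀⟩)
    exact hofr.mul (hf2.mul hf1)
  -- a neighborhood on which F is analytic in both variables
  obtain ⟨U, V, hUopen, hVopen, hU, hV, hUV⟩ :=
    generalized_tube_lemma isCompact_singleton (isCompact_Icc (a := (0:ℝ)) (b := 1))
      (isOpen_analyticAt ℝ F)
      (by
        rintro ⟨x, u⟩ ⟨hx, hu⟩
        rw [mem_singleton_iff] at hx
        subst hx
        exact hFan u hu)
  have hUmem : (t₀, s₀) ∈ U := hU rfl
  -- continuity of F (x, ·) for x ∈ U
  have hFcont : ∀ x ∈ U, ContinuousOn (fun u => F (x, u)) (Icc (0:ℝ) 1) := by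
    intro x hx u hu
    have : AnalyticAt ℝ F (x, u) := hUV (Set.mk_mem_prod hx (hV hu))
    exact (this.continuousAt.comp ((Continuous.prodMk continuous_const
      continuous_id).continuousAt)).continuousWithinAt
  -- charts: a power series ball at each point of the segment
  have hchart : ∀ u : Icc (0:ℝ) 1, ∃ (p : FormalMultilinearSeries ℝ ((ℝ × ℝ) × ℝ) ℂ)
      (ρ : ℝ≥0), 0 < ρ ∧ HasFPowerSeriesOnBall F p ((t₀, s₀), (u : ℝ)) ρ := by
    intro u
    obtain ⟨p, hp⟩ := hFan u u.2
    obtain ⟨R, hR⟩ := hp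
    obtain ⟨ρ, hρ0, hρR⟩ := ENNReal.lt_iff_exists_nnreal_btwn.1 hR.r_pos
    exact ⟨p, ρ, by exact_mod_cast hρ0, hR.mono (by exact_mod_cast hρ0) hρR.le⟩
  choose P ρ hρpos hball using hchart
  -- Lebesgue number for the cover by quarter-balls
  obtain ⟨δ, hδ0, hleb⟩ := lebesgue_number_lemma_of_metric
    (isCompact_Icc (a := (0:ℝ)) (b := 1))
    (c := fun i : Icc (0:ℝ) 1 => Metric.ball (i : ℝ) ((ρ i : ℝ) / 4))
    (fun i => Metric.isOpen_ball)
    (fun u hu => mem_iUnion.2 ⟨⟨u, hu⟩, by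
      simp only [Metric.mem_ball, dist_self]
      have := hρpos ⟨u, hu⟩
      positivity⟩)
  obtain ⟨n, hn⟩ := exists_nat_one_div_lt hδ0
  set m : ℕ := n + 1 with hm
  have hm0 : (0:ℝ) < m := by positivity
  set aseq : ℕ → ℝ := fun i => i / m with haseq
  have haseq_mem : ∀ i ≤ m, aseq i ∈ Icc (0:ℝ) 1 := by
    intro i hi
    constructor
    · positivity
    · rw [div_le_one hm0]
      exact_mod_cast hi
  have hstep : ∀ i : ℕ, aseq (i + 1) - aseq i = 1 / m := by
    intro i
    simp only [haseq]
    push_cast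
    field_simp
    ring
  -- pieces are analytic
  have hpiece : ∀ i ∈ Finset.range m, AnalyticAt ℝ
      (fun x : ℝ × ℝ => ∫ u in Ioc (aseq i) (aseq (i + 1)), F (x, u)) (t₀, s₀) := by
    intro i hi
    have hi' : i ≤ m := (Finset.mem_range.1 hi).le
    obtain ⟨j, hj⟩ := hleb (aseq i) (haseq_mem i hi')
    have hsub : Icc (aseq i) (aseq (i + 1)) ⊆ Metric.ball ((j : ℝ)) ((ρ j : ℝ) / 4) := by
      intro v hv
      refine hj ?_
      rw [Metric.mem_ball, Real.dist_eq, abs_sub_lt_iff]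
      have h1 := hv.1
      have h2 := hv.2
      have h3 := hstep i
      have hmn : (m:ℝ) = (n:ℝ) + 1 := by push_cast [hm]; ring
      rw [hmn] at h3
      constructor <;> linarith [hn, hδ0]
    have hab : aseq i ≤ aseq (i + 1) := by
      have := hstep i
      have : (0:ℝ) < 1 / m := by positivity
      linarith [hstep i]
    refine analyticAt_setIntegral_of_hasFPowerSeriesOnBall F (t₀, s₀) (j : ℝ)
      (P j) (ρ j) (hρpos j) (hball j) (aseq i) (aseq (i + 1)) hab ?_
    intro u hu
    have := hsub hu
    rw [Metric.mem_ball, Real.dist_eq] at this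
    rw [← NNReal.coe_lt_coe]
    push_cast
    simpa [nnnorm, Real.norm_eq_abs] using this
  have hsum : AnalyticAt ℝ
      (fun x : ℝ × ℝ => ∑ i ∈ Finset.range m, ∫ u in Ioc (aseq i) (aseq (i + 1)), F (x, u))
      (t₀, s₀) := Finset.analyticAt_fun_sum _ hpiece
  -- put the pieces together
  refine hsum.congr ?_
  have hUnhds : U ∈ nhds ((t₀, s₀) : ℝ × ℝ) := hUopen.mem_nhds hUmem
  filter_upwards [hUnhds] with x hx
  have hint : ∀ k < m, IntervalIntegrable (fun u => F (x, u)) volume (aseq k) (aseq (k + 1)) := by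
    intro k hk
    refine ContinuousOn.intervalIntegrable ?_
    refine (hFcont x hx).mono ?_
    rw [uIcc_of_le (by
      have := hstep k
      have h0 : (0:ℝ) < 1 / m := by positivity
      linarith)]
    intro v hv
    exact ⟨le_trans (haseq_mem k (le_of_lt hk)).1 hv.1,
      le_trans hv.2 (haseq_mem (k+1) hk).2⟩
  have hsplit := intervalIntegral.sum_integral_adjacent_intervals hint
  have ha0 : aseq 0 = 0 := by simp [haseq]
  have ham : aseq m = 1 := by
    simp only [haseq]
    field_simp
  rw [ha0, ham] at hsplit
  calc (∑ i ∈ Finset.range m, ∫ u in Ioc (aseq i) (aseq (i + 1)), F (x, u))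
      = ∑ i ∈ Finset.range m, ∫ u in (aseq i)..(aseq (i + 1)), F (x, u) := by
        refine Finset.sum_congr rfl fun i hi => ?_
        rw [intervalIntegral.integral_of_le]
        have := hstep i
        have h0 : (0:ℝ) < 1 / m := by positivity
        linarith
    _ = ∫ u in (0:ℝ)..1, F (x, u) := hsplit
    _ = ∫ τ in x.2..x.1, f2 (x.1, τ) * f1 (τ, x.2) := (key x).symm
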